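/- Explicit formula for truncated Cauchy–Carlitz numbers: for every integer N ≥ 0 and every n ≥ 1, CC_{N,n} = Π(n) Σ_{k=1}^{n} (−L_N)^k Σ_{i_1,…,i_k ≥ 1, r^{N+i_1}+⋯+r^{N+i_k} = n + k r^N} (−1)^{i_1+⋯+i_k}/(L_{N+i_1} ⋯ L_{N+i_k}), where the inner sum is over all ordered k-tuples of positive integers (i_1,…,i_k) with r^{N+i_1}+⋯+r^{N+i_k} = n + k r^N. -/

import Mathlib

/-!
Carlitz module: `Fq` is a finite field with `r = Fintype.card Fq` elements (so `r` is a
power of a prime `p`), and `K = Fq(T)` is the field of rational functions over `Fq`.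
-/

noncomputable section

variable (Fq : Type*) [Field Fq] [Fintype Fq]

/-- `r`, the number of elements of the finite field `Fq` (a prime power). -/
def rq : ℕ := Fintype.card Fq

/-- `[i] = T^{r^i} − T` in `K = Fq(T)`. -/
def carlitzBracket (i : ℕ) : RatFunc Fq := RatFunc.X ^ rq Fq ^ i - RatFunc.X

/-- `D_0 = 1`, `D_i = [i]·D_{i−1}^r`. -/
def carlitzD : ℕ → RatFunc Fq
  | 0 => 1
  | i + 1 => carlitzBracket Fq (i + 1) * carlitzD i ^ rq Fq

/-- `L_0 = 1`, `L_i = [i]·L_{i−1}`. -/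
def carlitzL : ℕ → RatFunc Fq
  | 0 => 1
  | i + 1 => carlitzBracket Fq (i + 1) * carlitzL i

/-- The Carlitz factorial `Π(i) = ∏_j D_j^{c_j}`, where `i = Σ_j c_j r^j` with
`0 ≤ c_j < r` is the base-`r` expansion of `i`. -/
def carlitzPi (i : ℕ) : RatFunc Fq :=
  ∏ j ∈ Finset.range (i + 1), carlitzD Fq j ^ (Nat.digits (rq Fq) i).getD j 0

/-- The power series `Σ_{j=0}^∞ (D_N/D_{N+j}) x^{r^{N+j} − r^N}`, i.e.
`(e_C(x) − Σ_{i=0}^{N−1} x^{r^i}/D_i)·D_N/x^{r^N}`; it has constant term `1`. -/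
def bcSeries (N : ℕ) : PowerSeries (RatFunc Fq) :=
  PowerSeries.mk fun m => ∑ j ∈ Finset.range (m + 1),
    if m = rq Fq ^ (N + j) - rq Fq ^ N then carlitzD Fq N / carlitzD Fq (N + j) else 0

/-- The truncated Bernoulli–Carlitz number `BC_{N,n}`: `BC_{N,n}/Π(n)` is the `n`-th
coefficient of the multiplicative inverse of the power series
`Σ_{j=0}^∞ (D_N/D_{N+j}) x^{r^{N+j} − r^N}`. -/
def truncBC (N n : ℕ) : RatFunc Fq :=
  carlitzPi Fq n * PowerSeries.coeff n (bcSeries Fq N)⁻¹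

/-- The power series `Σ_{j=0}^∞ (−1)^j (L_N/L_{N+j}) x^{r^{N+j} − r^N}`, i.e.
`(log_C(x) − Σ_{i=0}^{N−1} (−1)^i x^{r^i}/L_i)·(−1)^N L_N/x^{r^N}`;
it has constant term `1`. -/
def ccSeries (N : ℕ) : PowerSeries (RatFunc Fq) :=
  PowerSeries.mk fun m => ∑ j ∈ Finset.range (m + 1),
    if m = rq Fq ^ (N + j) - rq Fq ^ N then
      (-1) ^ j * carlitzL Fq N / carlitzL Fq (N + j) else 0

/-- The truncated Cauchy–Carlitz number `CC_{N,n}`: `CC_{N,n}/Π(n)` is the `n`-th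
coefficient of the multiplicative inverse of the power series
`Σ_{j=0}^∞ (−1)^j (L_N/L_{N+j}) x^{r^{N+j} − r^N}`. -/
def truncCC (N n : ℕ) : RatFunc Fq :=
  carlitzPi Fq n * PowerSeries.coeff n (ccSeries Fq N)⁻¹

/-- The tail `e_C(z) − 𝓔_{N−1}(z) = Σ_{i=N}^∞ z^{r^i}/D_i` of the Carlitz exponential. -/
def carlitzExpTail (N : ℕ) : PowerSeries (RatFunc Fq) :=
  PowerSeries.mk fun m => ∑ j ∈ Finset.range (m + 1),
    if m = rq Fq ^ (N + j) then (carlitzD Fq (N + j))⁻¹ else 0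

/-- The associated Stirling–Carlitz number of the second kind `{n brace k}_{C,≥N}`,
defined by `(e_C(z) − 𝓔_{N−1}(z))^k/Π(k) = Σ_n {n brace k}_{C,≥N} z^n/Π(n)`. -/
def stirling2C (N k n : ℕ) : RatFunc Fq :=
  carlitzPi Fq n / carlitzPi Fq k * PowerSeries.coeff n (carlitzExpTail Fq N ^ k)

/-- The tail `log_C(z) − 𝓕_{N−1}(z) = Σ_{i=N}^∞ (−1)^i z^{r^i}/L_i` of the Carlitz
logarithm. -/
def carlitzLogTail (N : ℕ) : PowerSeries (RatFunc Fq) :=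
  PowerSeries.mk fun m => ∑ j ∈ Finset.range (m + 1),
    if m = rq Fq ^ (N + j) then (-1) ^ (N + j) * (carlitzL Fq (N + j))⁻¹ else 0

/-- The associated Stirling–Carlitz number of the first kind `{n brack k}_{C,≥N}`,
defined by `(log_C(z) − 𝓕_{N−1}(z))^k/Π(k) = Σ_n {n brack k}_{C,≥N} z^n/Π(n)`. -/
def stirling1C (N k n : ℕ) : RatFunc Fq :=
  carlitzPi Fq n / carlitzPi Fq k * PowerSeries.coeff n (carlitzLogTail Fq N ^ k)

lemma ccAux_two_le_rq : 2 ≤ rq Fq := Fintype.one_lt_card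

lemma ccAux_bracket_ne_zero (i : ℕ) (hi : 1 ≤ i) : carlitzBracket Fq i ≠ 0 := by
  have h2 : 2 ≤ rq Fq ^ i := le_trans (ccAux_two_le_rq Fq) (Nat.le_self_pow (by omega) _)
  have hpoly : (Polynomial.X ^ rq Fq ^ i - Polynomial.X : Polynomial Fq) ≠ 0 := by
    intro h
    rw [sub_eq_zero] at h
    have := congrArg Polynomial.natDegree h
    rw [Polynomial.natDegree_X_pow, Polynomial.natDegree_X] at this
    omega
  have heq : carlitzBracket Fq i
      = algebraMap (Polynomial Fq) (RatFunc Fq) (Polynomial.X ^ rq Fq ^ i - Polynomial.X) := by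
    rw [carlitzBracket, map_sub, map_pow, RatFunc.algebraMap_X]
  rw [heq]
  exact RatFunc.algebraMap_ne_zero hpoly

lemma ccAux_L_ne_zero (i : ℕ) : carlitzL Fq i ≠ 0 := by
  induction i with
  | zero => exact one_ne_zero
  | succ i ih =>
      rw [carlitzL]
      exact mul_ne_zero (ccAux_bracket_ne_zero Fq _ (by omega)) ih

lemma ccAux_rN_le (N m : ℕ) : rq Fq ^ N ≤ rq Fq ^ (N + m) :=
  Nat.pow_le_pow_right (by have := ccAux_two_le_rq Fq; omega) (Nat.le_add_right _ _)

lemma ccAux_e_strictMono (N : ℕ) : StrictMono (fun j => rq Fq ^ (N + j) - rq Fq ^ N) := by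
  intro a b hab
  have h1 : rq Fq ^ (N + a) < rq Fq ^ (N + b) :=
    Nat.pow_lt_pow_right (by have := ccAux_two_le_rq Fq; omega) (by omega)
  have h2 := ccAux_rN_le Fq N a
  simp only
  omega

lemma ccAux_le_e (N j : ℕ) : j ≤ rq Fq ^ (N + j) - rq Fq ^ N := by
  rcases Nat.eq_zero_or_pos j with h | h
  · omega
  · have h1 : j < rq Fq ^ j := Nat.lt_pow_self (by have := ccAux_two_le_rq Fq; omega)
    have h2 : rq Fq ^ (N + j) = rq Fq ^ N * rq Fq ^ j := pow_add _ _ _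
    have h3 : rq Fq ^ N * (j + 1) ≤ rq Fq ^ N * rq Fq ^ j :=
      Nat.mul_le_mul_left _ (by omega)
    have h4 : 1 ≤ rq Fq ^ N := Nat.one_le_pow _ _ (by have := ccAux_two_le_rq Fq; omega)
    have h5 : rq Fq ^ N * (j + 1) = rq Fq ^ N * j + rq Fq ^ N := by ring
    have h6 : j ≤ rq Fq ^ N * j := Nat.le_mul_of_pos_left _ h4
    omega

lemma ccAux_coeff_e (N j : ℕ) :
    PowerSeries.coeff (rq Fq ^ (N + j) - rq Fq ^ N) (ccSeries Fq N)
      = (-1) ^ j * carlitzL Fq N / carlitzL Fq (N + j) := by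
  rw [ccSeries, PowerSeries.coeff_mk]
  have hinj := (ccAux_e_strictMono Fq N).injective
  have hmem : j ∈ Finset.range ((rq Fq ^ (N + j) - rq Fq ^ N) + 1) :=
    Finset.mem_range.2 (Nat.lt_succ_of_le (ccAux_le_e Fq N j))
  rw [Finset.sum_congr rfl (fun j' _ =>
    if_congr ⟨fun h => hinj h, fun h => by rw [h]⟩ rfl rfl), Finset.sum_ite_eq, if_pos hmem]

lemma ccAux_coeff_zero (N m : ℕ) (h : ∀ j, m ≠ rq Fq ^ (N + j) - rq Fq ^ N) :
    PowerSeries.coeff m (ccSeries Fq N) = 0 := by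
  rw [ccSeries, PowerSeries.coeff_mk]
  exact Finset.sum_eq_zero fun j _ => if_neg (h j)

lemma ccAux_constantCoeff (N : ℕ) :
    PowerSeries.constantCoeff (ccSeries Fq N) = 1 := by
  have h0 : rq Fq ^ (N + 0) - rq Fq ^ N = 0 := by simp
  have h := ccAux_coeff_e Fq N 0
  rw [h0] at h
  rw [← PowerSeries.coeff_zero_eq_constantCoeff, h, pow_zero, one_mul, Nat.add_zero,
    div_self (ccAux_L_ne_zero Fq N)]

/-- explicit formula for the truncated Cauchy–Carlitz numbers. -/
theorem truncCC_explicit (N n : ℕ) (hn : 1 ≤ n) :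
    truncCC Fq N n =
      carlitzPi Fq n * ∑ k ∈ Finset.Icc 1 n, (-carlitzL Fq N) ^ k *
        ∑ᶠ (i : Fin k → ℕ)
          (_ : (∀ j, 1 ≤ i j) ∧ ∑ j, rq Fq ^ (N + i j) = n + k * rq Fq ^ N),
          (-1 : RatFunc Fq) ^ (∑ j, i j) * ∏ j, (carlitzL Fq (N + i j))⁻¹ := by
  classical
  simp only [truncCC]
  congr 1
  set g : PowerSeries (RatFunc Fq) := 1 - ccSeries Fq N with hg
  have hr2 : 2 ≤ rq Fq := ccAux_two_le_rq Fq
  have hc1 : PowerSeries.constantCoeff (ccSeries Fq N) = 1 :=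
    ccAux_constantCoeff Fq N
  have hSinv : ccSeries Fq N * (ccSeries Fq N)⁻¹ = 1 :=
    PowerSeries.mul_inv_cancel _ (by rw [hc1]; exact one_ne_zero)
  have hinj : Function.Injective (fun j => rq Fq ^ (N + j) - rq Fq ^ N) :=
    (ccAux_e_strictMono Fq N).injective
  have hrNle : ∀ m, rq Fq ^ N ≤ rq Fq ^ (N + m) := ccAux_rN_le Fq N
  have hgcoeff : ∀ m : ℕ, 1 ≤ m →
      PowerSeries.coeff (rq Fq ^ (N + m) - rq Fq ^ N) g
        = -((-1) ^ m * carlitzL Fq N / carlitzL Fq (N + m)) := by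
    intro m hm
    have hpos : 1 ≤ rq Fq ^ (N + m) - rq Fq ^ N := by
      have h1 : rq Fq ^ N < rq Fq ^ (N + m) :=
        Nat.pow_lt_pow_right (by omega) (by omega)
      omega
    rw [hg, map_sub, PowerSeries.coeff_one, if_neg (by omega), ccAux_coeff_e, zero_sub]
  have hgdec : ∀ m : ℕ, PowerSeries.coeff m g ≠ 0 →
      ∃ j, 1 ≤ j ∧ m = rq Fq ^ (N + j) - rq Fq ^ N := by
    intro m hm
    by_contra hcon
    push_neg at hcon
    apply hm
    rcases Nat.eq_zero_or_pos m with h0 | h1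
    · subst h0
      simp [hg, map_sub, PowerSeries.coeff_zero_eq_constantCoeff, hc1]
    · have hall : ∀ j, m ≠ rq Fq ^ (N + j) - rq Fq ^ N := by
        intro j
        rcases Nat.eq_zero_or_pos j with hj0 | hj1
        · subst hj0
          simp only [Nat.add_zero, Nat.sub_self]
          omega
        · exact hcon j hj1
      rw [hg, map_sub, PowerSeries.coeff_one, if_neg (by omega),
        ccAux_coeff_zero Fq N m hall, zero_sub, neg_zero]
  have step1 : PowerSeries.coeff n (ccSeries Fq N)⁻¹
      = ∑ k ∈ Finset.Icc 1 n, PowerSeries.coeff n (g ^ k) := by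
    have hgeom : (∑ i ∈ Finset.range (n + 1), g ^ i) * ccSeries Fq N = 1 - g ^ (n + 1) := by
      have h := geom_sum_mul_neg g (n + 1)
      have h2 : (1 : PowerSeries (RatFunc Fq)) - g = ccSeries Fq N := by rw [hg]; ring
      rwa [h2] at h
    have heq : (∑ i ∈ Finset.range (n + 1), g ^ i)
        = (ccSeries Fq N)⁻¹ - g ^ (n + 1) * (ccSeries Fq N)⁻¹ := by
      have h3 := congrArg (· * (ccSeries Fq N)⁻¹) hgeom
      rw [mul_assoc, hSinv, mul_one] at h3
      rw [h3]; ring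
    have hz : PowerSeries.coeff n (g ^ (n + 1) * (ccSeries Fq N)⁻¹) = 0 := by
      have hXg : (PowerSeries.X : PowerSeries (RatFunc Fq)) ∣ g :=
        PowerSeries.X_dvd_iff.2 (by rw [hg]; simp [hc1])
      have hdvd : (PowerSeries.X : PowerSeries (RatFunc Fq)) ^ (n + 1)
          ∣ g ^ (n + 1) * (ccSeries Fq N)⁻¹ :=
        Dvd.dvd.mul_right (pow_dvd_pow_of_dvd hXg (n + 1)) _
      exact PowerSeries.X_pow_dvd_iff.1 hdvd n (by omega)
    have hcoeff := congrArg (PowerSeries.coeff n) heq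
    rw [map_sub, hz, sub_zero, map_sum] at hcoeff
    rw [← hcoeff, Finset.range_eq_Ico, Finset.sum_eq_sum_Ico_succ_bot (by omega), pow_zero,
      PowerSeries.coeff_one, if_neg (by omega), zero_add, Finset.Ico_add_one_right_eq_Icc]
  rw [step1]
  refine Finset.sum_congr rfl fun k hk => ?_
  obtain ⟨hk1, hkn⟩ := Finset.mem_Icc.mp hk
  set T : Finset (Fin k → ℕ) :=
    Finset.filter
      (fun i : Fin k → ℕ => (∀ j, 1 ≤ i j) ∧ ∑ j, rq Fq ^ (N + i j) = n + k * rq Fq ^ N)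
      (Fintype.piFinset fun _ => Finset.range (n + k * rq Fq ^ N + 1)) with hTdef
  have hmemT : ∀ i : Fin k → ℕ, i ∈ T ↔
      ((∀ j, 1 ≤ i j) ∧ ∑ j, rq Fq ^ (N + i j) = n + k * rq Fq ^ N) := by
    intro i
    rw [hTdef, Finset.mem_filter]
    constructor
    · exact fun h => h.2
    · intro h
      refine ⟨Fintype.mem_piFinset.2 fun j => Finset.mem_range.2 ?_, h⟩
      have h1 : i j < rq Fq ^ (i j) := Nat.lt_pow_self (by omega)
      have h2 : rq Fq ^ (i j) ≤ rq Fq ^ (N + i j) := Nat.pow_le_pow_right (by omega) (by omega)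
      have h3 : rq Fq ^ (N + i j) ≤ ∑ j', rq Fq ^ (N + i j') :=
        Finset.single_le_sum (f := fun j' => rq Fq ^ (N + i j'))
          (fun _ _ => Nat.zero_le _) (Finset.mem_univ j)
      have h4 := h.2
      omega
  have hfin : (∑ᶠ (i : Fin k → ℕ)
        (_ : (∀ j, 1 ≤ i j) ∧ ∑ j, rq Fq ^ (N + i j) = n + k * rq Fq ^ N),
        (-1 : RatFunc Fq) ^ (∑ j, i j) * ∏ j, (carlitzL Fq (N + i j))⁻¹)
      = ∑ i ∈ T, (-1 : RatFunc Fq) ^ (∑ j, i j) * ∏ j, (carlitzL Fq (N + i j))⁻¹ :=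
    finsum_cond_eq_sum_of_cond_iff _ fun {i} _ => (hmemT i).symm
  rw [hfin, PowerSeries.coeff_pow]
  have hbij : ∑ l ∈ Finset.finsuppAntidiag (Finset.range k) n,
        ∏ m ∈ Finset.range k, PowerSeries.coeff (l m) g
      = ∑ i ∈ T, ∏ j : Fin k,
          PowerSeries.coeff (rq Fq ^ (N + i j) - rq Fq ^ N) g := by
    refine Finset.sum_bij_ne_zero
      (fun l _ hne (j : Fin k) => (hgdec (l ↑j)
        (Finset.prod_ne_zero_iff.mp hne ↑j (Finset.mem_range.2 j.2))).choose)
      ?_ ?_ ?_ ?_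
    · intro l h1 h2
      obtain ⟨hsum, hsupp⟩ := Finset.mem_finsuppAntidiag.mp h1
      rw [hmemT]
      have hspec := fun j : Fin k => (hgdec (l ↑j)
        (Finset.prod_ne_zero_iff.mp h2 ↑j (Finset.mem_range.2 j.2))).choose_spec
      refine ⟨fun j => (hspec j).1, ?_⟩
      have hval : ∀ j : Fin k, rq Fq ^ (N + (hgdec (l ↑j)
          (Finset.prod_ne_zero_iff.mp h2 ↑j (Finset.mem_range.2 j.2))).choose)
          = l ↑j + rq Fq ^ N := by
        intro j
        have h5 := (hspec j).2
        have h6 := hrNle (hgdec (l ↑j)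
          (Finset.prod_ne_zero_iff.mp h2 ↑j (Finset.mem_range.2 j.2))).choose
        omega
      have hs2 : ∑ j : Fin k, (l ↑j + rq Fq ^ N) = n + k * rq Fq ^ N := by
        rw [Finset.sum_add_distrib, Finset.sum_const, Finset.card_univ, Fintype.card_fin,
          smul_eq_mul, Fin.sum_univ_eq_sum_range (fun m => l m), hsum]
      rw [← hs2]
      exact Finset.sum_congr rfl fun j _ => hval j
    · intro l1 h11 h12 l2 h21 h22 hEq
      have hs1 := fun j : Fin k => (hgdec (l1 ↑j)
        (Finset.prod_ne_zero_iff.mp h12 ↑j (Finset.mem_range.2 j.2))).choose_spec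
      have hs2 := fun j : Fin k => (hgdec (l2 ↑j)
        (Finset.prod_ne_zero_iff.mp h22 ↑j (Finset.mem_range.2 j.2))).choose_spec
      have hsupp1 := (Finset.mem_finsuppAntidiag.mp h11).2
      have hsupp2 := (Finset.mem_finsuppAntidiag.mp h21).2
      apply Finsupp.ext
      intro m
      by_cases hm : m < k
      · have h5 := congrFun hEq ⟨m, hm⟩
        have e1 := (hs1 ⟨m, hm⟩).2
        have e2 := (hs2 ⟨m, hm⟩).2
        rw [e1, e2]
        exact congrArg (fun c => rq Fq ^ (N + c) - rq Fq ^ N) (congrFun hEq ⟨m, hm⟩)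
      · have z1 : l1 m = 0 := Finsupp.notMem_support_iff.mp
          (fun hmem => hm (Finset.mem_range.mp (hsupp1 hmem)))
        have z2 : l2 m = 0 := Finsupp.notMem_support_iff.mp
          (fun hmem => hm (Finset.mem_range.mp (hsupp2 hmem)))
        rw [z1, z2]
    · intro b hb hbne
      obtain ⟨hb1, hbsum⟩ := (hmemT b).1 hb
      set l : ℕ →₀ ℕ := Finsupp.onFinset (Finset.range k)
        (fun m => if h : m < k then rq Fq ^ (N + b ⟨m, h⟩) - rq Fq ^ N else 0)
        (fun m hm => Finset.mem_range.2 (by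
          by_contra hc
          apply hm
          show (if h : m < k then rq Fq ^ (N + b ⟨m, h⟩) - rq Fq ^ N else 0) = 0
          exact dif_neg hc))
        with hldef
      have hlval : ∀ j : Fin k, l ↑j = rq Fq ^ (N + b j) - rq Fq ^ N := by
        intro j
        rw [hldef]
        simp only [Finsupp.onFinset_apply]
        rw [dif_pos j.2]
      have hA : ∑ j : Fin k, (rq Fq ^ (N + b j) - rq Fq ^ N) + k * rq Fq ^ N
          = n + k * rq Fq ^ N := by
        rw [← hbsum]
        calc ∑ j : Fin k, (rq Fq ^ (N + b j) - rq Fq ^ N) + k * rq Fq ^ N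
            = ∑ j : Fin k, (rq Fq ^ (N + b j) - rq Fq ^ N) + ∑ _j : Fin k, rq Fq ^ N := by
              rw [Finset.sum_const, Finset.card_univ, Fintype.card_fin, smul_eq_mul]
          _ = ∑ j : Fin k, ((rq Fq ^ (N + b j) - rq Fq ^ N) + rq Fq ^ N) :=
              (Finset.sum_add_distrib).symm
          _ = ∑ j : Fin k, rq Fq ^ (N + b j) :=
              Finset.sum_congr rfl fun j _ => by have := hrNle (b j); omega
      have hl1 : l ∈ Finset.finsuppAntidiag (Finset.range k) n := by
        rw [Finset.mem_finsuppAntidiag]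
        constructor
        · have hsum3 : ∑ m ∈ Finset.range k, l m = ∑ j : Fin k, l ↑j :=
            (Fin.sum_univ_eq_sum_range (fun m => l m) k).symm
          have hsum4 : ∑ j : Fin k, l ↑j = ∑ j : Fin k, (rq Fq ^ (N + b j) - rq Fq ^ N) :=
            Finset.sum_congr rfl fun j _ => hlval j
          have : (Finset.range k).sum l = ∑ j : Fin k, (rq Fq ^ (N + b j) - rq Fq ^ N) := by
            rw [← hsum4, ← hsum3]
          rw [this]
          omega
        · exact Finsupp.support_onFinset_subset
      have hfl : ∏ m ∈ Finset.range k, PowerSeries.coeff (l m) g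
          = ∏ j : Fin k,
              PowerSeries.coeff (rq Fq ^ (N + b j) - rq Fq ^ N) g := by
        rw [← Fin.prod_univ_eq_prod_range (fun m => PowerSeries.coeff (l m) g)]
        exact Finset.prod_congr rfl fun j _ => by rw [hlval j]
      have hlne : ∏ m ∈ Finset.range k, PowerSeries.coeff (l m) g ≠ 0 := by
        rw [hfl]; exact hbne
      refine ⟨l, hl1, hlne, funext fun j => ?_⟩
      have hspec := (hgdec (l ↑j)
        (Finset.prod_ne_zero_iff.mp hlne ↑j (Finset.mem_range.2 j.2))).choose_spec
      exact hinj (hspec.2.symm.trans (hlval j))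
    · intro l h1 h2
      have hspec := fun j : Fin k => (hgdec (l ↑j)
        (Finset.prod_ne_zero_iff.mp h2 ↑j (Finset.mem_range.2 j.2))).choose_spec
      refine (Fin.prod_univ_eq_prod_range (fun m => PowerSeries.coeff (l m) g) k).symm.trans ?_
      exact Finset.prod_congr rfl fun j _ => congrArg (fun c => PowerSeries.coeff c g) (hspec j).2
  rw [hbij, Finset.mul_sum]
  refine Finset.sum_congr rfl fun i hi => ?_
  obtain ⟨hi1, hisum⟩ := (hmemT i).1 hi
  calc ∏ j : Fin k, PowerSeries.coeff (rq Fq ^ (N + i j) - rq Fq ^ N) g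
      = ∏ j : Fin k, (-carlitzL Fq N) * ((-1) ^ (i j) * (carlitzL Fq (N + i j))⁻¹) := by
        refine Finset.prod_congr rfl fun j _ => ?_
        rw [hgcoeff (i j) (hi1 j), div_eq_mul_inv]
        ring
    _ = (-carlitzL Fq N) ^ k * ∏ j : Fin k, ((-1) ^ (i j) * (carlitzL Fq (N + i j))⁻¹) := by
        rw [Finset.prod_mul_distrib, Finset.prod_const, Finset.card_univ, Fintype.card_fin]
    _ = (-carlitzL Fq N) ^ k
          * ((-1) ^ (∑ j, i j) * ∏ j, (carlitzL Fq (N + i j))⁻¹) := by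
        rw [Finset.prod_mul_distrib, Finset.prod_pow_eq_pow_sum]

end
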